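/- Let D be a division ring with finite center F, and let a, b ∈ D be elements algebraic over F with ab ≠ ba. Then the F-subalgebra F[a,b] generated by a and b cannot be finite; equivalently, if F[a,b] is finite then ab = ba. -/
import Mathlib

/-- Let `D` be a division ring with finite center `F` and `a, b ∈ D` algebraic over `F` with
`ab ≠ ba`.  Then the `F`-subalgebra `F[a,b]` generated by `a` and `b` is not finite. -/
theorem subring_gen_not_finite_of_not_commute
    (D : Type*) [DivisionRing D] (hF : (Subring.center D : Set D).Finite)
    (a b : D)
    (ha : ∃ p : Polynomial D, p ≠ 0 ∧ (∀ i, p.coeff i ∈ Subring.center D) ∧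
      Polynomial.eval a p = 0)
    (hb : ∃ p : Polynomial D, p ≠ 0 ∧ (∀ i, p.coeff i ∈ Subring.center D) ∧
      Polynomial.eval b p = 0)
    (hab : a * b ≠ b * a) :
    ¬ ((Subring.closure ((Subring.center D : Set D) ∪ {a, b}) : Set D).Finite) := by
  intro hfin
  set R := Subring.closure ((Subring.center D : Set D) ∪ {a, b}) with hR
  haveI : Fintype R := hfin.fintype
  have hfield := Finite.isDomain_to_isField R
  have haR : a ∈ R := Subring.subset_closure (Or.inr (by simp))
  have hbR : b ∈ R := Subring.subset_closure (Or.inr (by simp))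
  have := hfield.mul_comm (⟨a, haR⟩ : R) ⟨b, hbR⟩
  exact hab congr(Subtype.val $this)
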